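/- Let C be a nonzero Cotton-like tensor on a 3-dimensional pseudo-Euclidean space (V,⟨·,·⟩). Then the kernel D = {u ∈ V : C(u,·,·) = 0} is a totally isotropic subspace of V, and hence dim D ≤ 1. -/

import Mathlib

set_option maxHeartbeats 1000000


/-- The kernel `D = {u : C(u,·,·) = 0}` of a nonzero Cotton-like tensor on a
3-dimensional pseudo-Euclidean space is totally isotropic, and hence has
dimension at most 1. -/
theorem stmt14 {V : Type*} [AddCommGroup V] [Module ℝ V] [FiniteDimensional ℝ V]
    (hdim : Module.finrank ℝ V = 3)
    (B : V →ₗ[ℝ] V →ₗ[ℝ] ℝ)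
    (hBsymm : ∀ x y : V, B x y = B y x)
    (hBnondeg : ∀ x : V, (∀ y : V, B x y = 0) → x = 0)
    (C : V →ₗ[ℝ] V →ₗ[ℝ] V →ₗ[ℝ] ℝ)
    (hCne : C ≠ 0)
    (hCanti : ∀ X Y Z : V, C X Y Z = - C Y X Z)
    (hCcyc : ∀ X Y Z : V, C X Y Z + C Y Z X + C Z X Y = 0)
    (hCtrace : ∀ (Y : V) (T : V →ₗ[ℝ] V),
      (∀ X Z : V, B (T X) Z = C X Y Z) → LinearMap.trace ℝ V T = 0) :
    (∀ w ∈ LinearMap.ker C, ∀ w' ∈ LinearMap.ker C, B w w' = 0) ∧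
      Module.finrank ℝ (LinearMap.ker C) ≤ 1 := by
  -- C vanishes if the first two arguments coincide
  have hself : ∀ X Z : V, C X X Z = 0 := by
    intro X Z; have := hCanti X X Z; linarith
  -- C vanishes whenever any slot contains a kernel element
  have hk1 : ∀ u ∈ LinearMap.ker C, ∀ Y Z : V, C u Y Z = 0 := by
    intro u hu Y Z
    have h : C u = 0 := LinearMap.mem_ker.mp hu
    simp [h]
  have hk2 : ∀ u ∈ LinearMap.ker C, ∀ X Z : V, C X u Z = 0 := by
    intro u hu X Z
    rw [hCanti, hk1 u hu, neg_zero]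
  have hk3 : ∀ u ∈ LinearMap.ker C, ∀ X Y : V, C X Y u = 0 := by
    intro u hu X Y
    have := hCcyc X Y u
    rw [hk1 u hu, hk2 u hu] at this
    linarith
  -- Kernel is contained in the span of any nonzero kernel element
  have hspan : ∀ u, u ∈ LinearMap.ker C → u ≠ 0 →
      ∀ w ∈ LinearMap.ker C, w ∈ Submodule.span ℝ {u} := by
    intro u hu hu0 w hw
    by_contra hws
    have h1 : LinearIndependent ℝ ![w, u] := by
      apply linearIndependent_fin_cons.mpr
      refine ⟨LinearIndependent.of_subsingleton (v := ![u]) 0 (by simpa), ?_⟩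
      simpa using hws
    obtain ⟨e, h2⟩ := exists_linearIndependent_snoc_of_lt_finrank h1 (by omega)
    have h2' : LinearIndependent ℝ ![w, u, e] := by
      have : (Fin.snoc ![w, u] e : Fin 3 → V) = ![w, u, e] := by
        funext i; fin_cases i <;> rfl
      rwa [this] at h2
    obtain ⟨b, hb⟩ : ∃ b : Module.Basis (Fin 3) ℝ V, ⇑b = ![w, u, e] :=
      ⟨basisOfLinearIndependentOfCardEqFinrank h2' (by simp [hdim]),
        coe_basisOfLinearIndependentOfCardEqFinrank h2' _⟩
    have hb0 : b 0 = w := by rw [hb]; rfl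
    have hb1 : b 1 = u := by rw [hb]; rfl
    have hb2 : b 2 = e := by rw [hb]; rfl
    apply hCne
    refine b.ext fun i => b.ext fun j => b.ext fun k => ?_
    fin_cases i <;> fin_cases j <;> fin_cases k <;>
      simp [hb0, hb1, hb2, hk1 u hu, hk2 u hu, hk3 u hu,
        hk1 w hw, hk2 w hw, hk3 w hw, hself]
  -- Every kernel element is null
  have hnull : ∀ u ∈ LinearMap.ker C, B u u = 0 := by
    intro u hu
    by_cases hu0 : u = 0
    · simp [hu0]
    -- build a basis with `b 0 = u`
    have h1 : LinearIndependent ℝ ![u] := LinearIndependent.of_subsingleton (v := ![u]) 0 (by simpa)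
    obtain ⟨e1, h2⟩ := exists_linearIndependent_snoc_of_lt_finrank h1 (by omega)
    have h2' : LinearIndependent ℝ ![u, e1] := by
      have : (Fin.snoc ![u] e1 : Fin 2 → V) = ![u, e1] := by
        funext i; fin_cases i <;> rfl
      rwa [this] at h2
    obtain ⟨e2, h3⟩ := exists_linearIndependent_snoc_of_lt_finrank h2' (by omega)
    have h3' : LinearIndependent ℝ ![u, e1, e2] := by
      have : (Fin.snoc ![u, e1] e2 : Fin 3 → V) = ![u, e1, e2] := by
        funext i; fin_cases i <;> rfl
      rwa [this] at h3
    obtain ⟨b, hb⟩ : ∃ b : Module.Basis (Fin 3) ℝ V, ⇑b = ![u, e1, e2] :=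
      ⟨basisOfLinearIndependentOfCardEqFinrank h3' (by simp [hdim]),
        coe_basisOfLinearIndependentOfCardEqFinrank h3' _⟩
    have hb0 : b 0 = u := by rw [hb]; rfl
    -- kernel facts at the basis level
    have hK1 : ∀ Y Z : V, C (b 0) Y Z = 0 := by rw [hb0]; exact hk1 u hu
    have hK2 : ∀ X Z : V, C X (b 0) Z = 0 := by rw [hb0]; exact hk2 u hu
    have hK3 : ∀ X Y : V, C X Y (b 0) = 0 := by rw [hb0]; exact hk3 u hu
    have hanti' : ∀ Z : V, C (b 2) (b 1) Z = - C (b 1) (b 2) Z :=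
      fun Z => hCanti _ _ _
    -- the 2-form ω and the functional f
    set c1 : V →ₗ[ℝ] ℝ := b.coord 1 with hc1
    set c2 : V →ₗ[ℝ] ℝ := b.coord 2 with hc2
    set f : V →ₗ[ℝ] ℝ := C (b 1) (b 2) with hf
    set ω : V →ₗ[ℝ] V →ₗ[ℝ] ℝ :=
      LinearMap.smulRight c1 c2 - LinearMap.smulRight c2 c1 with hω
    set C' : V →ₗ[ℝ] V →ₗ[ℝ] V →ₗ[ℝ] ℝ :=
      ω.compr₂ (LinearMap.toSpanSingleton ℝ (V →ₗ[ℝ] ℝ) f) with hC'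
    have hcoord : ∀ i j : Fin 3, b.coord i (b j) = if j = i then 1 else 0 := by
      intro i j
      simp [Module.Basis.coord_apply, Module.Basis.repr_self, Finsupp.single_apply]
    -- key structural identity : C = ω ⊗ f
    have hCC' : C = C' := by
      refine b.ext fun i => b.ext fun j => b.ext fun k => ?_
      have hC'app : ∀ X Y Z : V, C' X Y Z = (c1 X * c2 Y - c2 X * c1 Y) * f Z := by
        intro X Y Z
        simp [hC', hω, LinearMap.compr₂_apply, LinearMap.toSpanSingleton_apply,
          LinearMap.smulRight_apply, smul_eq_mul, sub_mul]
      rw [hC'app]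
      fin_cases i <;> fin_cases j <;> fin_cases k <;>
        simp [hc1, hc2, hcoord, hf, hK1, hK2, hK3, hself, hanti']
    have hkey : ∀ X Y Z : V, C X Y Z = (c1 X * c2 Y - c2 X * c1 Y) * f Z := by
      intro X Y Z
      rw [hCC']
      simp [hC', hω, LinearMap.compr₂_apply, LinearMap.toSpanSingleton_apply,
        LinearMap.smulRight_apply, smul_eq_mul, sub_mul]
    -- B-dual of f
    have hnd : LinearMap.BilinForm.Nondegenerate B :=
      ⟨fun x hx => hBnondeg x hx, fun y hy => hBnondeg y (fun x => by rw [hBsymm]; exact hy x)⟩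
    obtain ⟨vf, hvf⟩ : ∃ v : V, ∀ z, B v z = f z :=
      ⟨(LinearMap.BilinForm.toDual B hnd).symm f,
        fun z => LinearMap.BilinForm.apply_toDual_symm_apply ..⟩
    -- trace computation for rank-one maps
    have htr : ∀ (g : V →ₗ[ℝ] ℝ) (v : V),
        LinearMap.trace ℝ V (LinearMap.smulRight g v) =
          g (b 0) * b.repr v 0 + g (b 1) * b.repr v 1 + g (b 2) * b.repr v 2 := by
      intro g v
      rw [LinearMap.trace_eq_matrix_trace ℝ b]
      simp [Matrix.trace, LinearMap.toMatrix_apply, Fin.sum_univ_three, mul_comm,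
        Matrix.vecMulVec_apply]
    -- apply the trace-free hypothesis with Y = b 2 and Y = b 1
    have ht1 : b.repr vf 1 = 0 := by
      have h := hCtrace (b 2) (LinearMap.smulRight c1 vf) ?_
      · rw [htr] at h
        simp only [hc1, hcoord] at h
        norm_num [Fin.ext_iff] at h
        exact h
      · intro X Z
        rw [hkey X (b 2) Z]
        rw [LinearMap.smulRight_apply, LinearMap.map_smul₂, smul_eq_mul, hvf Z]
        rw [show c2 (b 2) = 1 by rw [hc2, hcoord]; norm_num [Fin.ext_iff],
          show c1 (b 2) = 0 by rw [hc1, hcoord]; norm_num [Fin.ext_iff]]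
        ring
    have ht2 : b.repr vf 2 = 0 := by
      have h := hCtrace (b 1) (LinearMap.smulRight (-c2) vf) ?_
      · rw [htr] at h
        simp only [LinearMap.neg_apply, hc2, hcoord] at h
        norm_num [Fin.ext_iff] at h
        exact h
      · intro X Z
        rw [hkey X (b 1) Z]
        rw [LinearMap.smulRight_apply, LinearMap.neg_apply,
          LinearMap.map_smul₂, smul_eq_mul, hvf Z]
        rw [show c2 (b 1) = 0 by rw [hc2, hcoord]; norm_num [Fin.ext_iff],
          show c1 (b 1) = 1 by rw [hc1, hcoord]; norm_num [Fin.ext_iff]]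
        ring
    -- hence vf is a multiple of u
    have hvfu : vf = b.repr vf 0 • u := by
      have := b.sum_repr vf
      rw [Fin.sum_univ_three, ht1, ht2] at this
      simpa [hb0] using this.symm
    -- f is nonzero (else C = 0)
    have hfne : f ≠ 0 := by
      intro hf0
      apply hCne
      ext X Y Z
      rw [hkey, hf0]
      simp
    have hc0 : b.repr vf 0 ≠ 0 := by
      intro h0
      apply hfne
      have : vf = 0 := by rw [hvfu, h0, zero_smul]
      ext z
      rw [← hvf z, this]
      simp
    -- conclude
    have hfu : f u = 0 := by rw [hf]; exact hk3 u hu _ _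
    have h1 : B vf u = f u := hvf u
    rw [hfu, hvfu, LinearMap.map_smul₂, smul_eq_mul] at h1
    exact (mul_eq_zero.mp h1).resolve_left hc0
  constructor
  · intro w hw w' hw'
    by_cases hw0 : w = 0
    · simp [hw0]
    · obtain ⟨c, rfl⟩ := Submodule.mem_span_singleton.mp (hspan w hw hw0 w' hw')
      simp [hnull w hw]
  · by_cases hbot : LinearMap.ker C = ⊥
    · rw [hbot, finrank_bot]; omega
    · obtain ⟨u, hu, hu0⟩ := Submodule.exists_mem_ne_zero_of_ne_bot hbot
      have hle : LinearMap.ker C ≤ Submodule.span ℝ {u} := fun w hw => hspan u hu hu0 w hw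
      calc Module.finrank ℝ (LinearMap.ker C)
          ≤ Module.finrank ℝ (Submodule.span ℝ {u}) := Submodule.finrank_mono hle
        _ = 1 := finrank_span_singleton hu0
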